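/- Let M₃ be the model with states {s,t}, relation {(s,s),(t,t)}, atom p true exactly at s, and all costs 1, and let M₄ be the model with the single state s, relation {(s,s)}, p true at s, and all costs 1. Then (M₃,s) ⊨ ⟨∠¹⟩X[∠⁰]X¬p and (M₄,s) ⊭ ⟨∠¹⟩X[∠⁰]X¬p. -/
import Mathlib


set_option linter.unusedVariables false

/-! ## Models -/

structure Mdl (S : Type) where
  rel : S → S → Prop
  val : ℕ → Set S
  cost : S → S → ℕ

namespace Mdl
variable {S : Type}

/-- A proper model: serial relation and positive costs. -/
def IsModel (M : Mdl S) : Prop := (∀ s, ∃ t, M.rel s t) ∧ ∀ s t, 0 < M.cost s t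

def Serial (M : Mdl S) : Prop := ∀ s, ∃ t, M.rel s t

def remove (M : Mdl S) (A : Set (S × S)) : Mdl S :=
  { M with rel := fun a b => M.rel a b ∧ (a, b) ∉ A }

def add (M : Mdl S) (A : Set (S × S)) : Mdl S :=
  { M with rel := fun a b => M.rel a b ∨ (a, b) ∈ A }

/-- The set of edges `A` is finite with total cost at most `n`. -/
def costLe (M : Mdl S) (A : Set (S × S)) (n : ℕ) : Prop :=
  ∃ F : Finset (S × S), A = ↑F ∧ ∑ e ∈ F, M.cost e.1 e.2 ≤ n

end Mdl

abbrev PModel (S : Type) := Mdl S × S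
abbrev Strat (S : Type) := PModel S → Set (S × S)
abbrev MPath (S : Type) := ℕ → PModel S

/-- A demonic strategy outputs a subset of the edges of the given model. -/
def IsDemonic {S : Type} (σ : Strat S) : Prop :=
  ∀ Ms : PModel S, σ Ms ⊆ {e : S × S | Ms.1.rel e.1 e.2}

/-- An angelic strategy outputs a set of non-edges of the given model. -/
def IsAngelic {S : Type} (σ : Strat S) : Prop :=
  ∀ Ms : PModel S, σ Ms ⊆ {e : S × S | ¬ Ms.1.rel e.1 e.2}

/-! ### Demonic (SDL) paths -/

def DStep {S : Type} (σ : Strat S) (x y : PModel S) : Prop :=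
  y.1 = x.1.remove (σ x) ∧ y.1.Serial ∧ y.1.rel x.2 y.2

def DCompat {S : Type} (σ : Strat S) (π : MPath S) : Prop := ∀ i, DStep σ (π i) (π (i+1))

/-- `σ` is an `n`-strategy: on every compatible path each removed set has cost at most `n`. -/
def DBound {S : Type} (σ : Strat S) (n : ℕ) : Prop :=
  ∀ π : MPath S, DCompat σ π → ∀ i, (π i).1.costLe (σ (π i)) n

/-! ### Angelic (SCL) paths -/

def AStep {S : Type} (σ : Strat S) (x y : PModel S) : Prop :=
  y.1 = x.1.add (σ x) ∧ y.1.rel x.2 y.2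

def ACompat {S : Type} (σ : Strat S) (π : MPath S) : Prop := ∀ i, AStep σ (π i) (π (i+1))

def ABound {S : Type} (σ : Strat S) (n : ℕ) : Prop :=
  ∀ π : MPath S, ACompat σ π → ∀ i, (π i).1.costLe (σ (π i)) n

/-! ### Update (SUL) paths: angel budget `n`, demon budget `m` -/

def UStep {S : Type} (Sa Sd : Strat S) (n m : ℕ) (x y : PModel S) : Prop :=
  x.1.costLe (Sa x) n ∧ x.1.costLe (Sd x) m ∧
  y.1 = (x.1.remove (Sd x)).add (Sa x) ∧ y.1.Serial ∧ y.1.rel x.2 y.2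

def UCompat {S : Type} (Sa Sd : Strat S) (n m : ℕ) (π : MPath S) : Prop :=
  ∀ i, UStep Sa Sd n m (π i) (π (i+1))

/-! ## SDL -/

mutual
inductive SDLF : Type
  | atom : ℕ → SDLF
  | neg : SDLF → SDLF
  | and : SDLF → SDLF → SDLF
  | dia : ℕ → SDLP → SDLF
inductive SDLP : Type
  | nxt : SDLF → SDLP
  | untl : SDLF → SDLF → SDLP
  | rls : SDLF → SDLF → SDLP
end

mutual
def SDLSat {S : Type} : PModel S → SDLF → Prop
  | Ms, .atom p => Ms.2 ∈ Ms.1.val p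
  | Ms, .neg φ => ¬ SDLSat Ms φ
  | Ms, .and φ χ => SDLSat Ms φ ∧ SDLSat Ms χ
  | Ms, .dia n ψ => ∃ σ : Strat S, IsDemonic σ ∧ DBound σ n ∧
      ∀ π : MPath S, π 0 = Ms → DCompat σ π → SDLPSat π ψ
def SDLPSat {S : Type} : MPath S → SDLP → Prop
  | π, .nxt φ => SDLSat (π 1) φ
  | π, .untl φ χ => ∃ j, SDLSat (π j) χ ∧ ∀ i < j, SDLSat (π i) φ
  | π, .rls φ χ => (∀ j, SDLSat (π j) χ) ∨ ∃ k, SDLSat (π k) φ ∧ ∀ i ≤ k, SDLSat (π i) χ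
end

/-! ## SCL -/

mutual
inductive SCLF : Type
  | atom : ℕ → SCLF
  | neg : SCLF → SCLF
  | and : SCLF → SCLF → SCLF
  | dia : ℕ → SCLP → SCLF
inductive SCLP : Type
  | nxt : SCLF → SCLP
  | untl : SCLF → SCLF → SCLP
  | rls : SCLF → SCLF → SCLP
end

mutual
def SCLSat {S : Type} : PModel S → SCLF → Prop
  | Ms, .atom p => Ms.2 ∈ Ms.1.val p
  | Ms, .neg φ => ¬ SCLSat Ms φ
  | Ms, .and φ χ => SCLSat Ms φ ∧ SCLSat Ms χ
  | Ms, .dia n ψ => ∃ σ : Strat S, IsAngelic σ ∧ ABound σ n ∧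
      ∀ π : MPath S, π 0 = Ms → ACompat σ π → SCLPSat π ψ
def SCLPSat {S : Type} : MPath S → SCLP → Prop
  | π, .nxt φ => SCLSat (π 1) φ
  | π, .untl φ χ => ∃ j, SCLSat (π j) χ ∧ ∀ i < j, SCLSat (π i) φ
  | π, .rls φ χ => (∀ j, SCLSat (π j) χ) ∨ ∃ k, SCLSat (π k) φ ∧ ∀ i ≤ k, SCLSat (π i) χ
end

/-! ## SUL -/

/-- Coalitions `C ⊆ {∠, ★}`. -/
inductive Coal : Type
  | both : Coal
  | onlyAngel : Coal
  | onlyDemon : Coal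
  | neither : Coal

mutual
inductive SULF : Type
  | atom : ℕ → SULF
  | neg : SULF → SULF
  | and : SULF → SULF → SULF
  | strat : Coal → ℕ → ℕ → SULP → SULF
inductive SULP : Type
  | nxt : SULF → SULP
  | untl : SULF → SULF → SULP
  | rls : SULF → SULF → SULP
end

mutual
def SULSat {S : Type} : PModel S → SULF → Prop
  | Ms, .atom p => Ms.2 ∈ Ms.1.val p
  | Ms, .neg φ => ¬ SULSat Ms φ
  | Ms, .and φ χ => SULSat Ms φ ∧ SULSat Ms χ
  | Ms, .strat .both n m ψ =>
      -- ⟨⟨∠ⁿ,★ᵐ⟩⟩ψ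
      ∃ Sa : Strat S, IsAngelic Sa ∧ ∃ Sd : Strat S, IsDemonic Sd ∧
        ∀ π : MPath S, π 0 = Ms → UCompat Sa Sd n m π → SULPSat π ψ
  | Ms, .strat .onlyAngel n m ψ =>
      -- ⟨⟨∠^{n,m}⟩⟩ψ : angel has budget n, demon budget m
      ∃ Sa : Strat S, IsAngelic Sa ∧ ∀ Sd : Strat S, IsDemonic Sd →
        ∀ π : MPath S, π 0 = Ms → UCompat Sa Sd n m π → SULPSat π ψ
  | Ms, .strat .onlyDemon n m ψ =>
      -- ⟨⟨★^{n,m}⟩⟩ψ : demon has budget n, angel budget m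
      ∃ Sd : Strat S, IsDemonic Sd ∧ ∀ Sa : Strat S, IsAngelic Sa →
        ∀ π : MPath S, π 0 = Ms → UCompat Sa Sd m n π → SULPSat π ψ
  | Ms, .strat .neither n m ψ =>
      -- ⟨⟨∅^{n,m}⟩⟩ψ
      ∀ Sa : Strat S, IsAngelic Sa → ∀ Sd : Strat S, IsDemonic Sd →
        ∀ π : MPath S, π 0 = Ms → UCompat Sa Sd n m π → SULPSat π ψ
def SULPSat {S : Type} : MPath S → SULP → Prop
  | π, .nxt φ => SULSat (π 1) φ
  | π, .untl φ χ => ∃ j, SULSat (π j) χ ∧ ∀ i < j, SULSat (π i) φ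
  | π, .rls φ χ => (∀ j, SULSat (π j) χ) ∨ ∃ k, SULSat (π k) φ ∧ ∀ i ≤ k, SULSat (π i) χ
end

/-! ## Obstruction Logic -/

mutual
inductive OLF : Type
  | atom : ℕ → OLF
  | neg : OLF → OLF
  | and : OLF → OLF → OLF
  | dia : ℕ → OLP → OLF
inductive OLP : Type
  | nxt : OLF → OLP
  | untl : OLF → OLF → OLP
  | rls : OLF → OLF → OLP
end

/-- An OL `n`-strategy over the fixed model `M`. -/
def IsOLStrategy {S : Type} (M : Mdl S) (σ : S → Set (S × S)) (n : ℕ) : Prop :=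
  ∀ s, σ s ⊆ {e : S × S | M.rel e.1 e.2} ∧ M.costLe (σ s) n ∧
    ∃ t, M.rel s t ∧ (s, t) ∉ σ s

def OLCompat {S : Type} (M : Mdl S) (σ : S → Set (S × S)) (π : ℕ → S) : Prop :=
  ∀ i, M.rel (π i) (π (i+1)) ∧ (π i, π (i+1)) ∉ σ (π i)

mutual
def OLSat {S : Type} (M : Mdl S) : S → OLF → Prop
  | s, .atom p => s ∈ M.val p
  | s, .neg φ => ¬ OLSat M s φ
  | s, .and φ χ => OLSat M s φ ∧ OLSat M s χ
  | s, .dia n ψ => ∃ σ : S → Set (S × S), IsOLStrategy M σ n ∧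
      ∀ π : ℕ → S, π 0 = s → OLCompat M σ π → OLPSat M π ψ
def OLPSat {S : Type} (M : Mdl S) : (ℕ → S) → OLP → Prop
  | π, .nxt φ => OLSat M (π 1) φ
  | π, .untl φ χ => ∃ j, OLSat M (π j) χ ∧ ∀ i < j, OLSat M (π i) φ
  | π, .rls φ χ => (∀ j, OLSat M (π j) χ) ∨ ∃ k, OLSat M (π k) φ ∧ ∀ i ≤ k, OLSat M (π i) χ
end

/-! ## CTL -/

inductive CTLF : Type
  | atom : ℕ → CTLF
  | neg : CTLF → CTLF
  | and : CTLF → CTLF → CTLF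
  | ax : CTLF → CTLF
  | ex : CTLF → CTLF
  | au : CTLF → CTLF → CTLF
  | ar : CTLF → CTLF → CTLF
  | eu : CTLF → CTLF → CTLF
  | er : CTLF → CTLF → CTLF

def IsPath {S : Type} (M : Mdl S) (π : ℕ → S) : Prop := ∀ i, M.rel (π i) (π (i+1))

def CTLSat {S : Type} (M : Mdl S) : S → CTLF → Prop
  | s, .atom p => s ∈ M.val p
  | s, .neg φ => ¬ CTLSat M s φ
  | s, .and φ χ => CTLSat M s φ ∧ CTLSat M s χ
  | s, .ax φ => ∀ π : ℕ → S, π 0 = s → IsPath M π → CTLSat M (π 1) φ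
  | s, .ex φ => ∃ π : ℕ → S, π 0 = s ∧ IsPath M π ∧ CTLSat M (π 1) φ
  | s, .au φ χ => ∀ π : ℕ → S, π 0 = s → IsPath M π →
      ∃ j, CTLSat M (π j) χ ∧ ∀ i < j, CTLSat M (π i) φ
  | s, .ar φ χ => ∀ π : ℕ → S, π 0 = s → IsPath M π →
      ((∀ j, CTLSat M (π j) χ) ∨ ∃ k, CTLSat M (π k) φ ∧ ∀ i ≤ k, CTLSat M (π i) χ)
  | s, .eu φ χ => ∃ π : ℕ → S, π 0 = s ∧ IsPath M π ∧
      ∃ j, CTLSat M (π j) χ ∧ ∀ i < j, CTLSat M (π i) φ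
  | s, .er φ χ => ∃ π : ℕ → S, π 0 = s ∧ IsPath M π ∧
      ((∀ j, CTLSat M (π j) χ) ∨ ∃ k, CTLSat M (π k) φ ∧ ∀ i ≤ k, CTLSat M (π i) χ)

/-! ## Statement 12 -/

/-- The model `M₃`: states `{s,t}` (encoded as `Bool`, with `s = true` and
`t = false`), relation `{(s,s),(t,t)}`, atom `p` (atom `0`) true exactly at `s`,
and all costs `1`. -/
def M3 : Mdl Bool :=
  { rel := fun a b => a = b
    val := fun q => {x | q = 0 ∧ x = true}
    cost := fun _ _ => 1 }

/-- The model `M₄`: a single state `s`, relation `{(s,s)}`, atom `p` (atom `0`)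
true at `s`, and all costs `1`. -/
def M4 : Mdl Unit :=
  { rel := fun _ _ => True
    val := fun q => {_x | q = 0}
    cost := fun _ _ => 1 }

/-- The SCL formula `⟨∠¹⟩X[∠⁰]X¬p`, where `[∠⁰]X¬p = ¬⟨∠⁰⟩¬(X¬p) = ¬⟨∠⁰⟩Xp`
and `p` is atom `0`. -/
def sclWitness : SCLF :=
  SCLF.dia 1 (SCLP.nxt (SCLF.neg (SCLF.dia 0 (SCLP.nxt (SCLF.atom 0)))))

/-- Iterate a strategy: always move to state `t`. -/
def iterP {S : Type} (σ : Strat S) (x : PModel S) (t : S) : ℕ → PModel S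
  | 0 => x
  | n+1 => ((iterP σ x t n).1.add (σ (iterP σ x t n)), t)

lemma iterP_rel_mono {S : Type} (σ : Strat S) (x : PModel S) (t : S)
    {a b : S} (h : x.1.rel a b) : ∀ n, (iterP σ x t n).1.rel a b
  | 0 => h
  | n+1 => Or.inl (iterP_rel_mono σ x t h n)

lemma iterP_val {S : Type} (σ : Strat S) (x : PModel S) (t : S) :
    ∀ n, (iterP σ x t n).1.val = x.1.val
  | 0 => rfl
  | n+1 => iterP_val σ x t n

lemma iterP_compat {S : Type} (σ : Strat S) (x : PModel S) (t : S)
    (h1 : x.1.rel x.2 t) (h2 : x.1.rel t t) : ACompat σ (iterP σ x t) := by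
  intro i
  refine ⟨rfl, Or.inl ?_⟩
  cases i with
  | zero => exact h1
  | succ n => exact iterP_rel_mono σ x t h2 (n+1)

/-- `(M₃,s) ⊨ ⟨∠¹⟩X[∠⁰]X¬p` and `(M₄,s) ⊭ ⟨∠¹⟩X[∠⁰]X¬p`. -/
theorem M3_sat_M4_not_sat :
    SCLSat (M3, true) sclWitness ∧ ¬ SCLSat (M4, ()) sclWitness := by
  constructor
  · -- M3 satisfies
    refine ⟨fun Ms => {e | e = (true, false) ∧ ¬ Ms.1.rel true false ∧
        Ms.1.cost true false ≤ 1}, ?_, ?_, ?_⟩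
    · rintro Ms ⟨a, b⟩ ⟨he, hnr, _⟩
      cases he
      exact hnr
    · intro π hπ i
      by_cases h : ¬ (π i).1.rel true false ∧ (π i).1.cost true false ≤ 1
      · refine ⟨{(true, false)}, ?_, ?_⟩
        · ext e
          simp only [Set.mem_setOf_eq, Finset.coe_singleton, Set.mem_singleton_iff]
          exact ⟨fun h' => h'.1, fun h' => ⟨h', h.1, h.2⟩⟩
        · simpa using h.2
      · refine ⟨∅, ?_, by simp⟩
        ext e
        simp only [Set.mem_setOf_eq, Finset.coe_empty, Set.mem_empty_iff_false, iff_false]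
        rintro ⟨he, hnr, hc⟩
        exact h ⟨hnr, hc⟩
    · intro π h0 hc
      have hstep := hc 0
      rw [h0] at hstep
      obtain ⟨hm, hr⟩ := hstep
      have hσ : {e : Bool × Bool | e = (true, false) ∧ ¬ M3.rel true false ∧
          M3.cost true false ≤ 1} = {(true, false)} := by
        ext e
        simp only [Set.mem_setOf_eq, Set.mem_singleton_iff, M3, and_iff_left_iff_imp]
        intro _
        exact ⟨by simp, le_refl 1⟩
      -- the model at time 1
      have hrel1 : ∀ a b : Bool, (π 1).1.rel a b ↔ (a = b ∨ (a, b) = (true, false)) := by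
        intro a b
        rw [hm]
        simp [Mdl.add, M3, Set.mem_setOf_eq]
      have hval1 : (π 1).1.val = M3.val := by rw [hm]; rfl
      -- refute the inner diamond
      show ¬ SCLSat (π 1) (SCLF.dia 0 (SCLP.nxt (SCLF.atom 0)))
      rintro ⟨σ, hang, hb, hall⟩
      have h1 : (π 1).1.rel (π 1).2 false := by
        rw [hrel1]
        cases h : (π 1).2 <;> simp
      have h2 : (π 1).1.rel false false := by rw [hrel1]; left; rfl
      have := hall (iterP σ (π 1) false) rfl (iterP_compat σ (π 1) false h1 h2)
      have hmem : (iterP σ (π 1) false 1).2 ∈ (iterP σ (π 1) false 1).1.val 0 := this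
      rw [iterP_val σ (π 1) false 1, hval1] at hmem
      simp only [iterP, M3, Set.mem_setOf_eq] at hmem
      exact Bool.false_ne_true hmem.2
  · -- M4 does not satisfy
    rintro ⟨σ₁, hang, hb, hall⟩
    have h1 : (M4, ()).1.rel (M4, ()).2 () := trivial
    have := hall (iterP σ₁ (M4, ()) ()) rfl (iterP_compat σ₁ (M4, ()) () h1 h1)
    -- `this : ¬ ⟨∠⁰⟩Xp` at `iterP σ₁ (M4,()) () 1`
    apply this
    refine ⟨fun _ => ∅, fun _ => Set.empty_subset _, ?_, ?_⟩
    · intro π hπ i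
      exact ⟨∅, by simp, by simp⟩
    · intro ρ h0 hcρ
      have hstep := hcρ 0
      obtain ⟨hm, _⟩ := hstep
      show (ρ 1).2 ∈ (ρ 1).1.val 0
      have : (ρ 1).1.val = M4.val := by
        rw [hm, h0]
        show (iterP σ₁ (M4, ()) () 1).1.val = M4.val
        exact iterP_val σ₁ (M4, ()) () 1
      rw [this]
      simp [M4]
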